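/- At every point of U, q̃ satisfies the Riccati equation along backward characteristics: q̃_t − c·q̃_x = ã₀ − ã₁·q̃ + ã₂·q̃². -/

import Mathlib

open Real

/-- Partial derivative with respect to `t` (the first coordinate). -/
noncomputable def pdt (f : ℝ × ℝ → ℝ) (pt : ℝ × ℝ) : ℝ := fderiv ℝ f pt (1, 0)

/-- Partial derivative with respect to `x` (the second coordinate). -/
noncomputable def pdx (f : ℝ × ℝ → ℝ) (pt : ℝ × ℝ) : ℝ := fderiv ℝ f pt (0, 1)

lemma pd_comm (f : ℝ × ℝ → ℝ) (pt : ℝ × ℝ) (hf : ContDiffAt ℝ 2 f pt) (v w : ℝ × ℝ) :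
    fderiv ℝ (fun p => fderiv ℝ f p w) pt v = fderiv ℝ (fun p => fderiv ℝ f p v) pt w := by
  have hd : DifferentiableAt ℝ (fderiv ℝ f) pt :=
    (hf.fderiv_right (le_refl 2)).differentiableAt one_ne_zero
  rw [fderiv_clm_apply hd (differentiableAt_const w),
      fderiv_clm_apply hd (differentiableAt_const v)]
  simp only [fderiv_fun_const, Pi.zero_apply, ContinuousLinearMap.comp_zero, zero_add,
    ContinuousLinearMap.add_apply, ContinuousLinearMap.flip_apply]
  exact (hf.isSymmSndFDerivAt (by simp [minSmoothness_of_isRCLikeNormedField])) v w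

set_option maxHeartbeats 1000000 in
/-- Riccati equation for `q̃` along backward characteristics:
`q̃‵ = ã₀ − ã₁·q̃ + ã₂·q̃²` on `U`. -/
theorem stmt_8
    (γ Kc : ℝ) (hγ : 1 < γ) (hKc : 0 < Kc)
    (U : Set (ℝ × ℝ)) (hU : IsOpen U)
    (u z m : ℝ × ℝ → ℝ)
    (hu : ContDiffOn ℝ 2 u U) (hz : ContDiffOn ℝ 2 z U) (hm : ContDiffOn ℝ 2 m U)
    (hzpos : ∀ pt ∈ U, 0 < z pt) (hmpos : ∀ pt ∈ U, 0 < m pt)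
    (c p : ℝ × ℝ → ℝ)
    (hc : c = fun pt => Kc * m pt * z pt ^ ((γ + 1) / (γ - 1)))
    (hp : p = fun pt => ((γ - 1) / (2 * γ) * Kc) * (m pt) ^ 2 * z pt ^ (2 * γ / (γ - 1)))
    (heq1 : ∀ pt ∈ U, pdt z pt + (c pt / m pt) * pdx u pt = 0)
    (heq2 : ∀ pt ∈ U, pdt u pt + m pt * c pt * pdx z pt + 2 * (p pt / m pt) * pdx m pt = 0)
    (heq3 : ∀ pt ∈ U, pdt m pt = 0)
    (α β : ℝ × ℝ → ℝ)
    (hα : α = fun pt => pdx u pt + m pt * pdx z pt + ((γ - 1) / γ) * pdx m pt * z pt)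
    (hβ : β = fun pt => pdx u pt - m pt * pdx z pt - ((γ - 1) / γ) * pdx m pt * z pt)
    (yt qt : ℝ × ℝ → ℝ)
    (hyt : yt = fun pt => z pt ^ ((γ + 1) / (2 * (γ - 1))) * α pt
      + ((γ - 1) / (γ * (3 * γ - 1))) * z pt ^ ((γ + 1) / (2 * (γ - 1)) + 1) * pdx m pt)
    (hqt : qt = fun pt => z pt ^ ((γ + 1) / (2 * (γ - 1))) * β pt
      - ((γ - 1) / (γ * (3 * γ - 1))) * z pt ^ ((γ + 1) / (2 * (γ - 1)) + 1) * pdx m pt)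
    (a0t : ℝ × ℝ → ℝ)
    (ha0t : a0t = fun pt => (Kc / γ) * (((γ - 1) / (3 * γ - 1)) * m pt * pdx (pdx m) pt
      - ((3 * γ + 1) * (γ - 1) / (3 * γ - 1) ^ 2) * (pdx m pt) ^ 2)
      * z pt ^ (3 * (γ + 1) / (2 * (γ - 1)) + 1))
    (a1t : ℝ × ℝ → ℝ)
    (ha1t : a1t = fun pt => Kc * (3 * (3 - γ) / (2 * (3 * γ - 1))) * pdx m pt * z pt ^ ((γ + 1) / (γ - 1)))
    (a2t : ℝ × ℝ → ℝ)
    (ha2t : a2t = fun pt => -Kc * ((γ + 1) / (2 * (γ - 1))) * z pt ^ ((γ + 1) / (2 * (γ - 1)) - 1))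
 :
    ∀ pt ∈ U, pdt qt pt - c pt * pdx qt pt
      = a0t pt - a1t pt * qt pt + a2t pt * (qt pt) ^ 2 := by
  subst hc hp hα hβ hyt hqt ha0t ha1t ha2t
  intro pt hpt
  have hmem : U ∈ nhds pt := hU.mem_nhds hpt
  have hZ : 0 < z pt := hzpos pt hpt
  have hM : 0 < m pt := hmpos pt hpt
  have hγ1 : (0:ℝ) < γ - 1 := by linarith
  have hγ0 : γ ≠ 0 := by positivity
  have h3γ : (3 * γ - 1 : ℝ) ≠ 0 := by nlinarith
  -- smoothness and differentiability facts
  have hu2 : ContDiffAt ℝ 2 u pt := hu.contDiffAt hmem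
  have hz2 : ContDiffAt ℝ 2 z pt := hz.contDiffAt hmem
  have hm2 : ContDiffAt ℝ 2 m pt := hm.contDiffAt hmem
  have hzd : DifferentiableAt ℝ z pt := hz2.differentiableAt two_ne_zero
  have hmd : DifferentiableAt ℝ m pt := hm2.differentiableAt two_ne_zero
  have hu1 : DifferentiableAt ℝ (fderiv ℝ u) pt :=
    (hu2.fderiv_right (le_refl 2)).differentiableAt one_ne_zero
  have hz1 : DifferentiableAt ℝ (fderiv ℝ z) pt :=
    (hz2.fderiv_right (le_refl 2)).differentiableAt one_ne_zero
  have hm1 : DifferentiableAt ℝ (fderiv ℝ m) pt :=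
    (hm2.fderiv_right (le_refl 2)).differentiableAt one_ne_zero
  have HuxD : DifferentiableAt ℝ (fun p => fderiv ℝ u p (0,1)) pt :=
    hu1.clm_apply (differentiableAt_const _)
  have HzxD : DifferentiableAt ℝ (fun p => fderiv ℝ z p (0,1)) pt :=
    hz1.clm_apply (differentiableAt_const _)
  have HmxD : DifferentiableAt ℝ (fun p => fderiv ℝ m p (0,1)) pt :=
    hm1.clm_apply (differentiableAt_const _)
  have Hz : HasFDerivAt z (fderiv ℝ z pt) pt := hzd.hasFDerivAt
  have Hm : HasFDerivAt m (fderiv ℝ m pt) pt := hmd.hasFDerivAt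
  have Hux : HasFDerivAt (fun p => fderiv ℝ u p (0,1))
    (fderiv ℝ (fun p => fderiv ℝ u p (0,1)) pt) pt := HuxD.hasFDerivAt
  have Hzx : HasFDerivAt (fun p => fderiv ℝ z p (0,1))
    (fderiv ℝ (fun p => fderiv ℝ z p (0,1)) pt) pt := HzxD.hasFDerivAt
  have Hmx : HasFDerivAt (fun p => fderiv ℝ m p (0,1))
    (fderiv ℝ (fun p => fderiv ℝ m p (0,1)) pt) pt := HmxD.hasFDerivAt
  have Hze : HasFDerivAt (fun p : ℝ × ℝ => z p ^ ((γ + 1) / (2 * (γ - 1))))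
      (((γ + 1) / (2 * (γ - 1)) * z pt ^ ((γ + 1) / (2 * (γ - 1)) - 1)) • fderiv ℝ z pt) pt :=
    HasDerivAt.comp_hasFDerivAt pt (Real.hasDerivAt_rpow_const (Or.inl hZ.ne')) Hz
  have Hze1 : HasFDerivAt (fun p : ℝ × ℝ => z p ^ ((γ + 1) / (2 * (γ - 1)) + 1))
      ((((γ + 1) / (2 * (γ - 1)) + 1) * z pt ^ ((γ + 1) / (2 * (γ - 1)) + 1 - 1)) • fderiv ℝ z pt) pt :=
    HasDerivAt.comp_hasFDerivAt pt (Real.hasDerivAt_rpow_const (Or.inl hZ.ne')) Hz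
  have Hzθ : HasFDerivAt (fun p : ℝ × ℝ => z p ^ ((γ + 1) / (γ - 1)))
      (((γ + 1) / (γ - 1) * z pt ^ ((γ + 1) / (γ - 1) - 1)) • fderiv ℝ z pt) pt :=
    HasDerivAt.comp_hasFDerivAt pt (Real.hasDerivAt_rpow_const (Or.inl hZ.ne')) Hz
  have Hzθ1 : HasFDerivAt (fun p : ℝ × ℝ => z p ^ ((γ + 1) / (γ - 1) + 1))
      ((((γ + 1) / (γ - 1) + 1) * z pt ^ ((γ + 1) / (γ - 1) + 1 - 1)) • fderiv ℝ z pt) pt :=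
    HasDerivAt.comp_hasFDerivAt pt (Real.hasDerivAt_rpow_const (Or.inl hZ.ne')) Hz
  -- the PDE, as eventual equalities for the time derivatives
  have hEz : (fun p => fderiv ℝ z p (1,0)) =ᶠ[nhds pt]
      (fun p => -(Kc * z p ^ ((γ + 1) / (γ - 1))) * fderiv ℝ u p (0,1)) := by
    filter_upwards [hmem] with q hq
    have h1 := heq1 q hq
    simp only [pdt, pdx] at h1
    have hmq := (hmpos q hq).ne'
    have hdiv : Kc * m q * z q ^ ((γ + 1) / (γ - 1)) / m q = Kc * z q ^ ((γ + 1) / (γ - 1)) := by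
      rw [div_eq_iff hmq]; ring
    rw [hdiv] at h1
    linear_combination h1
  have hEu : (fun p => fderiv ℝ u p (1,0)) =ᶠ[nhds pt]
      (fun p => -(Kc * (m p * m p) * z p ^ ((γ + 1) / (γ - 1)) * fderiv ℝ z p (0,1)
        + ((γ - 1) / γ * Kc) * m p * z p ^ ((γ + 1) / (γ - 1) + 1) * fderiv ℝ m p (0,1))) := by
    filter_upwards [hmem] with q hq
    have h2 := heq2 q hq
    simp only [pdt, pdx] at h2
    have hmq := (hmpos q hq).ne'
    have hxi : 2 * γ / (γ - 1) = (γ + 1) / (γ - 1) + 1 := by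
      field_simp
      ring
    rw [hxi] at h2
    have hdiv : 2 * ((((γ - 1) / (2 * γ) * Kc) * (m q) ^ 2 * z q ^ ((γ + 1) / (γ - 1) + 1)) / m q)
        = (γ - 1) / γ * Kc * m q * z q ^ ((γ + 1) / (γ - 1) + 1) := by
      field_simp
    rw [hdiv] at h2
    linear_combination h2
  have hEm : (fun p => fderiv ℝ m p (1,0)) =ᶠ[nhds pt] (fun _ => (0:ℝ)) := by
    filter_upwards [hmem] with q hq
    simpa [pdt] using heq3 q hq
  -- first-order time-derivative values at pt
  have hZT : fderiv ℝ z pt (1,0)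
      = -(Kc * z pt ^ ((γ + 1) / (γ - 1))) * fderiv ℝ u pt (0,1) := hEz.eq_of_nhds
  have hMT : fderiv ℝ m pt (1,0) = 0 := hEm.eq_of_nhds
  -- mixed second derivatives
  have hMXT : fderiv ℝ (fun p => fderiv ℝ m p (0,1)) pt (1,0) = 0 := by
    rw [pd_comm m pt hm2, hEm.fderiv_eq]
    simp
  have hZXT : fderiv ℝ (fun p => fderiv ℝ z p (0,1)) pt (1,0)
      = -(Kc * z pt ^ ((γ + 1) / (γ - 1))) * fderiv ℝ (fun p => fderiv ℝ u p (0,1)) pt (0,1)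
        - Kc * ((γ + 1) / (γ - 1)) * z pt ^ ((γ + 1) / (γ - 1) - 1)
          * fderiv ℝ z pt (0,1) * fderiv ℝ u pt (0,1) := by
    rw [pd_comm z pt hz2, hEz.fderiv_eq]
    have Hg : HasFDerivAt (fun p : ℝ × ℝ =>
        -(Kc * z p ^ ((γ + 1) / (γ - 1))) * fderiv ℝ u p (0,1)) _ pt :=
      ((Hzθ.const_mul Kc).neg).mul Hux
    rw [Hg.fderiv]
    simp only [ContinuousLinearMap.add_apply, ContinuousLinearMap.sub_apply,
      ContinuousLinearMap.neg_apply, ContinuousLinearMap.smul_apply, smul_eq_mul, Pi.neg_apply]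
    ring
  have hUXT : fderiv ℝ (fun p => fderiv ℝ u p (0,1)) pt (1,0)
      = -(Kc * (m pt * m pt) * z pt ^ ((γ + 1) / (γ - 1))
            * fderiv ℝ (fun p => fderiv ℝ z p (0,1)) pt (0,1)
        + 2 * Kc * m pt * fderiv ℝ m pt (0,1) * z pt ^ ((γ + 1) / (γ - 1)) * fderiv ℝ z pt (0,1)
        + Kc * (m pt * m pt) * ((γ + 1) / (γ - 1)) * z pt ^ ((γ + 1) / (γ - 1) - 1)
            * fderiv ℝ z pt (0,1) * fderiv ℝ z pt (0,1)
        + ((γ - 1) / γ * Kc) * m pt * z pt ^ ((γ + 1) / (γ - 1) + 1)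
            * fderiv ℝ (fun p => fderiv ℝ m p (0,1)) pt (0,1)
        + ((γ - 1) / γ * Kc) * fderiv ℝ m pt (0,1) * z pt ^ ((γ + 1) / (γ - 1) + 1)
            * fderiv ℝ m pt (0,1)
        + ((γ - 1) / γ * Kc) * m pt * ((γ + 1) / (γ - 1) + 1) * z pt ^ ((γ + 1) / (γ - 1) + 1 - 1)
            * fderiv ℝ z pt (0,1) * fderiv ℝ m pt (0,1)) := by
    rw [pd_comm u pt hu2, hEu.fderiv_eq]
    have Hg : HasFDerivAt (fun p : ℝ × ℝ =>
        -(Kc * (m p * m p) * z p ^ ((γ + 1) / (γ - 1)) * fderiv ℝ z p (0,1)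
          + ((γ - 1) / γ * Kc) * m p * z p ^ ((γ + 1) / (γ - 1) + 1) * fderiv ℝ m p (0,1))) _ pt :=
      (((((Hm.mul Hm).const_mul Kc).mul Hzθ).mul Hzx).add
        (((Hm.const_mul ((γ - 1) / γ * Kc)).mul Hzθ1).mul Hmx)).neg
    rw [Hg.fderiv]
    simp only [ContinuousLinearMap.add_apply, ContinuousLinearMap.sub_apply,
      ContinuousLinearMap.neg_apply, ContinuousLinearMap.smul_apply, smul_eq_mul, Pi.neg_apply,
      Pi.mul_apply]
    ring
  -- main computation
  rw [show pdx m = fun p => fderiv ℝ m p (0,1) from rfl]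
  simp only [pdt, pdx]
  have Hβ : HasFDerivAt (fun p : ℝ × ℝ =>
      fderiv ℝ u p (0,1) - m p * fderiv ℝ z p (0,1)
        - (γ - 1) / γ * fderiv ℝ m p (0,1) * z p) _ pt :=
    (Hux.sub (Hm.mul Hzx)).sub ((Hmx.const_mul ((γ - 1) / γ)).mul Hz)
  have Hq : HasFDerivAt (fun p : ℝ × ℝ =>
      z p ^ ((γ + 1) / (2 * (γ - 1))) * (fderiv ℝ u p (0,1) - m p * fderiv ℝ z p (0,1)
        - (γ - 1) / γ * fderiv ℝ m p (0,1) * z p)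
      - (γ - 1) / (γ * (3 * γ - 1)) * z p ^ ((γ + 1) / (2 * (γ - 1)) + 1)
        * fderiv ℝ m p (0,1)) _ pt :=
    (Hze.mul Hβ).sub ((Hze1.const_mul ((γ - 1) / (γ * (3 * γ - 1)))).mul Hmx)
  rw [Hq.fderiv]
  simp only [ContinuousLinearMap.add_apply, ContinuousLinearMap.sub_apply,
    ContinuousLinearMap.neg_apply, ContinuousLinearMap.smul_apply, smul_eq_mul]
  rw [hZT, hMT, hZXT, hUXT, hMXT]
  rw [show (γ + 1) / (2 * (γ - 1)) + 1 - 1 = (γ + 1) / (2 * (γ - 1)) from by ring]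
  rw [show (γ + 1) / (γ - 1) + 1 - 1 = (γ + 1) / (γ - 1) from by ring]
  rw [show 3 * (γ + 1) / (2 * (γ - 1)) + 1
      = (γ + 1) / (2 * (γ - 1)) + (γ + 1) / (2 * (γ - 1)) + (γ + 1) / (2 * (γ - 1)) + 1 from by
    field_simp; ring]
  rw [show (γ + 1) / (γ - 1) = (γ + 1) / (2 * (γ - 1)) + (γ + 1) / (2 * (γ - 1)) from by
    field_simp; ring]
  rw [show (γ + 1) / (2 * (γ - 1)) + (γ + 1) / (2 * (γ - 1)) - 1
      = (γ + 1) / (2 * (γ - 1)) + (γ + 1) / (2 * (γ - 1)) + (-1) from by ring]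
  rw [show (γ + 1) / (2 * (γ - 1)) - 1 = (γ + 1) / (2 * (γ - 1)) + (-1) from by ring]
  simp only [Real.rpow_add hZ, Real.rpow_one, Real.rpow_neg_one]
  have h3γ' : γ * 3 - 1 ≠ 0 := by contrapose! h3γ; linarith
  field_simp
  ring
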